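/- Let k ≥ 1 and let F : (Fin k → ℕ) → ℝ be a function on residual supply profiles satisfying the monotonicity property: whenever z, z' differ only in coordinates i < j with z i = z' i + 1 and z j = z' j − 1 (and agree elsewhere), F z ≥ F z'. Fix y, u with u feasible for y, and let v* be the top-down recursive solution. Then for every v ∈ V(u,y), F(y − v*) ≥ F(y − v), i.e., v* maximizes v ↦ F(y − v) over V(u,y). -/
import Mathlib

namespace Stmt5Aux

variable {k : ℕ}

def Pre (w : Fin k → ℕ) (n : ℕ) : ℕ :=
  ∑ l ∈ Finset.univ.filter (fun l : Fin k => l.val < n), w l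

def Suf (w : Fin k → ℕ) (n : ℕ) : ℕ :=
  ∑ l ∈ Finset.univ.filter (fun l : Fin k => n ≤ l.val), w l

lemma Pre_zero (w : Fin k → ℕ) : Pre w 0 = 0 := by
  simp [Pre]

lemma Pre_add_Suf (w : Fin k → ℕ) (n : ℕ) : Pre w n + Suf w n = ∑ l, w l := by
  rw [Pre, Suf]
  rw [← Finset.sum_filter_add_sum_filter_not Finset.univ (fun l : Fin k => l.val < n) w]
  congr 1
  apply Finset.sum_congr _ (fun _ _ => rfl)
  ext l
  simp [Nat.not_lt]

lemma Suf_of_ge (w : Fin k → ℕ) {n : ℕ} (h : k ≤ n) : Suf w n = 0 := by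
  rw [Suf]
  have : Finset.univ.filter (fun l : Fin k => n ≤ l.val) = ∅ := by
    ext l
    simp only [Finset.mem_filter, Finset.mem_univ, true_and, Finset.notMem_empty, iff_false]
    have := l.isLt
    omega
  rw [this, Finset.sum_empty]

lemma Pre_ge (w : Fin k → ℕ) {n : ℕ} (h : k ≤ n) : Pre w n = ∑ l, w l := by
  have h1 := Pre_add_Suf w n
  rw [Suf_of_ge w h] at h1
  omega

lemma Suf_zero (w : Fin k → ℕ) : Suf w 0 = ∑ l, w l := by
  have := Pre_add_Suf w 0
  rw [Pre_zero] at this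
  omega

lemma Suf_succ (w : Fin k → ℕ) {n : ℕ} (h : n < k) :
    Suf w n = w ⟨n, h⟩ + Suf w (n + 1) := by
  rw [Suf, Suf]
  have hset : Finset.univ.filter (fun l : Fin k => n ≤ l.val)
      = insert ⟨n, h⟩ (Finset.univ.filter (fun l : Fin k => n + 1 ≤ l.val)) := by
    ext l
    simp only [Finset.mem_filter, Finset.mem_univ, true_and, Finset.mem_insert, Fin.ext_iff]
    omega
  rw [hset, Finset.sum_insert (by
    simp only [Finset.mem_filter, Finset.mem_univ, true_and]; omega)]

lemma Pre_succ (w : Fin k → ℕ) {n : ℕ} (h : n < k) :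
    Pre w (n + 1) = Pre w n + w ⟨n, h⟩ := by
  rw [Pre, Pre]
  have hset : Finset.univ.filter (fun l : Fin k => l.val < n + 1)
      = insert ⟨n, h⟩ (Finset.univ.filter (fun l : Fin k => l.val < n)) := by
    ext l
    simp only [Finset.mem_filter, Finset.mem_univ, true_and, Finset.mem_insert, Fin.ext_iff]
    omega
  rw [hset, Finset.sum_insert (by
    simp only [Finset.mem_filter, Finset.mem_univ, true_and]; omega), add_comm]

lemma sum_Iic (w : Fin k → ℕ) (j : Fin k) :
    ∑ l ∈ Finset.Iic j, w l = Pre w (j.val + 1) := by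
  rw [Pre]
  apply Finset.sum_congr _ (fun _ _ => rfl)
  ext l
  simp only [Finset.mem_Iic, Finset.mem_filter, Finset.mem_univ, true_and, Fin.le_def]
  omega

lemma sum_Ioi (w : Fin k → ℕ) (j : Fin k) :
    ∑ l ∈ Finset.Ioi j, w l = Suf w (j.val + 1) := by
  rw [Suf]
  apply Finset.sum_congr _ (fun _ _ => rfl)
  ext l
  simp only [Finset.mem_Ioi, Finset.mem_filter, Finset.mem_univ, true_and, Fin.lt_def]
  omega

lemma down_ind (P : ℕ → Prop) (h0 : ∀ n, k ≤ n → P n)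
    (hstep : ∀ n, n < k → P (n + 1) → P n) : ∀ n, P n := by
  have key : ∀ d n, k ≤ n + d → P n := by
    intro d
    induction d with
    | zero => intro n hn; exact h0 n (by omega)
    | succ d ih =>
      intro n hn
      by_cases h : k ≤ n
      · exact h0 n h
      · exact hstep n (by omega) (ih (n + 1) (by omega))
  intro n
  exact key k n (by omega)

lemma pre_all (hk : 1 ≤ k) {a b : Fin k → ℕ}
    (h : ∀ j : Fin k, Pre a (j.val + 1) ≤ Pre b (j.val + 1)) :
    ∀ n, Pre a n ≤ Pre b n := by
  have htot : ∑ l, a l ≤ ∑ l, b l := by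
    have := h ⟨k - 1, by omega⟩
    simp only at this
    rw [show k - 1 + 1 = k by omega] at this
    rw [Pre_ge a le_rfl, Pre_ge b le_rfl] at this
    exact this
  intro n
  rcases Nat.eq_zero_or_pos n with h0 | h0
  · subst h0; simp [Pre_zero]
  by_cases hn : n ≤ k
  · have := h ⟨n - 1, by omega⟩
    simp only at this
    rwa [show n - 1 + 1 = n by omega] at this
  · rw [Pre_ge a (by omega), Pre_ge b (by omega)]
    exact htot

section Claims

variable (u y vstar : Fin k → ℕ)
variable (hvstar : ∀ j : Fin k,
  vstar j = min (y j) (u j + (Suf u (j.val + 1) - Suf vstar (j.val + 1))))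

include hvstar

lemma claimA : ∀ n, Suf vstar n ≤ Suf u n := by
  apply down_ind
  · intro n hn; rw [Suf_of_ge vstar hn, Suf_of_ge u hn]
  · intro n hn ih
    rw [Suf_succ vstar hn, Suf_succ u hn]
    have hv : vstar ⟨n, hn⟩ ≤ u ⟨n, hn⟩ + (Suf u (n + 1) - Suf vstar (n + 1)) := by
      rw [hvstar ⟨n, hn⟩]; exact min_le_right _ _
    omega

lemma claimB (hu : ∀ n, Pre u n ≤ Pre y n) :
    ∀ n, (∑ l, u l) ≤ Suf vstar n + Pre y n := by
  have hA := claimA u y vstar hvstar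
  apply down_ind
  · intro n hn
    rw [Suf_of_ge vstar hn, Pre_ge y hn]
    have := hu k
    rw [Pre_ge u le_rfl, Pre_ge y le_rfl] at this
    omega
  · intro n hn ih
    have hv := hvstar ⟨n, hn⟩
    rw [Suf_succ vstar hn]
    rcases le_total (y ⟨n, hn⟩) (u ⟨n, hn⟩ + (Suf u (n + 1) - Suf vstar (n + 1))) with hc | hc
    · -- capped: vstar n = y n
      rw [min_eq_left hc] at hv
      have hps := Pre_succ y hn
      omega
    · -- uncapped
      rw [min_eq_right hc] at hv
      have hA1 := hA (n + 1)
      have hsu := Suf_succ u hn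
      have h1 := Pre_add_Suf u n
      have h2 := hu n
      omega

lemma claimC (v : Fin k → ℕ) (hvy : ∀ m, v m ≤ y m)
    (hfeas : ∀ n, Pre u n ≤ Pre v n) (hvtot : (∑ l, v l) = ∑ l, u l) :
    ∀ n, Suf v n ≤ Suf vstar n := by
  have hA := claimA u y vstar hvstar
  apply down_ind
  · intro n hn; rw [Suf_of_ge v hn, Suf_of_ge vstar hn]
  · intro n hn ih
    have hv := hvstar ⟨n, hn⟩
    rw [Suf_succ vstar hn, Suf_succ v hn]
    rcases le_total (y ⟨n, hn⟩) (u ⟨n, hn⟩ + (Suf u (n + 1) - Suf vstar (n + 1))) with hc | hc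
    · rw [min_eq_left hc] at hv
      have := hvy ⟨n, hn⟩
      omega
    · rw [min_eq_right hc] at hv
      have hA1 := hA (n + 1)
      have hsu := Suf_succ u hn
      have h1 := Pre_add_Suf u n
      have h2 := Pre_add_Suf v n
      have h3 := hfeas n
      have h4 := Suf_succ v hn
      omega

end Claims

lemma exchange (F : (Fin k → ℕ) → ℝ)
    (hF : ∀ z z' : Fin k → ℕ, ∀ i j : Fin k, i < j →
      z i = z' i + 1 → z' j = z j + 1 → (∀ l : Fin k, l ≠ i → l ≠ j → z l = z' l) →
      F z' ≤ F z) :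
    ∀ N : ℕ, ∀ z z' : Fin k → ℕ, (∀ n, Pre z' n ≤ Pre z n) →
      ((∑ l, z l) = ∑ l, z' l) →
      ((∑ n ∈ Finset.range (k + 1), (Pre z n - Pre z' n)) ≤ N) → F z' ≤ F z := by
  intro N
  induction N with
  | zero =>
    intro z z' hle htot hmeas
    have hsum0 : (∑ n ∈ Finset.range (k + 1), (Pre z n - Pre z' n)) = 0 := by omega
    have hterm : ∀ n ∈ Finset.range (k + 1), Pre z n - Pre z' n = 0 :=
      Finset.sum_eq_zero_iff.mp hsum0
    have hpre : ∀ n, n ≤ k → Pre z n = Pre z' n := by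
      intro n hn
      have h1 := hterm n (Finset.mem_range.mpr (by omega))
      have h2 := hle n
      omega
    have hzz : z = z' := by
      funext l
      have e1 := Pre_succ z l.isLt
      have e2 := Pre_succ z' l.isLt
      have h1 := hpre l.val (by omega)
      have h2 := hpre (l.val + 1) (by have := l.isLt; omega)
      have hl : (⟨l.val, l.isLt⟩ : Fin k) = l := rfl
      rw [hl] at e1 e2
      omega
    rw [hzz]
  | succ N ih =>
    intro z z' hle htot hmeas
    by_cases hzz : z = z'
    · rw [hzz]
    -- the set of disagreement
    have hne1 : (Finset.univ.filter (fun l : Fin k => z l ≠ z' l)).Nonempty := by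
      rcases Function.ne_iff.mp hzz with ⟨l, hl⟩
      exact ⟨l, by simp [hl]⟩
    set i : Fin k := (Finset.univ.filter (fun l : Fin k => z l ≠ z' l)).min' hne1 with hi_def
    have hi_mem : z i ≠ z' i := by
      have := Finset.min'_mem (Finset.univ.filter (fun l : Fin k => z l ≠ z' l)) hne1
      simpa using this
    have hi_min : ∀ l : Fin k, z l ≠ z' l → i ≤ l := by
      intro l hl
      exact Finset.min'_le _ _ (by simp [hl])
    have hpre_i : ∀ m, m ≤ i.val → Pre z m = Pre z' m := by
      intro m hm
      apply Finset.sum_congr rfl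
      intro l hl
      rw [Finset.mem_filter] at hl
      by_contra hne
      have := hi_min l hne
      rw [Fin.le_def] at this
      omega
    have hzi : z' i < z i := by
      have h1 := hle (i.val + 1)
      have e1 := Pre_succ z i.isLt
      have e2 := Pre_succ z' i.isLt
      have hl : (⟨i.val, i.isLt⟩ : Fin k) = i := rfl
      rw [hl] at e1 e2
      have h2 := hpre_i i.val le_rfl
      omega
    have hne2 : (Finset.univ.filter (fun l : Fin k => z l < z' l)).Nonempty := by
      by_contra hempty
      rw [Finset.not_nonempty_iff_eq_empty] at hempty
      have hall : ∀ l : Fin k, z' l ≤ z l := by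
        intro l
        by_contra h
        have : l ∈ Finset.univ.filter (fun l : Fin k => z l < z' l) := by
          simp; omega
        rw [hempty] at this
        exact absurd this (Finset.notMem_empty l)
      have : (∑ l, z' l) < ∑ l, z l :=
        Finset.sum_lt_sum (fun l _ => hall l) ⟨i, Finset.mem_univ i, hzi⟩
      omega
    set j : Fin k := (Finset.univ.filter (fun l : Fin k => z l < z' l)).min' hne2 with hj_def
    have hj_mem : z j < z' j := by
      have := Finset.min'_mem (Finset.univ.filter (fun l : Fin k => z l < z' l)) hne2
      simpa using this
    have hj_min : ∀ l : Fin k, z l < z' l → j ≤ l := by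
      intro l hl
      exact Finset.min'_le _ _ (by simp [hl])
    have hij : i < j := by
      have h1 : i ≤ j := hi_min j (by omega)
      rcases lt_or_eq_of_le h1 with h | h
      · exact h
      · exfalso; rw [h] at hzi; omega
    have hijv : i.val < j.val := hij
    have hmid : ∀ l : Fin k, i < l → l < j → z' l ≤ z l := by
      intro l h1 h2
      by_contra h
      have := hj_min l (by omega)
      exact absurd h2 (not_lt.mpr this)
    -- construct intermediate z''
    set z'' : Fin k → ℕ :=
      fun l => if l = i then z' l + 1 else if l = j then z' l - 1 else z' l with hz''_def
    have h1j : 1 ≤ z' j := by omega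
    have hz''i : z'' i = z' i + 1 := by simp [hz''_def]
    have hz''j : z'' j = z' j - 1 := by
      have : j ≠ i := ne_of_gt hij
      simp [hz''_def, this]
    have hz''o : ∀ l : Fin k, l ≠ i → l ≠ j → z'' l = z' l := by
      intro l h1 h2
      simp [hz''_def, h1, h2]
    -- key prefix relation for z''
    have key : ∀ n, Pre z'' n + (if j.val < n then 1 else 0)
        = Pre z' n + (if i.val < n then 1 else 0) := by
      intro n
      induction n with
      | zero => simp [Pre_zero]
      | succ n ihn =>
        by_cases hn : n < k
        · rw [Pre_succ z'' hn, Pre_succ z' hn]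
          rcases eq_or_ne (⟨n, hn⟩ : Fin k) i with hfi | hfi
          · have hiv : i.val = n := by rw [← hfi]
            have hz : z'' ⟨n, hn⟩ = z' ⟨n, hn⟩ + 1 := by simp [hz''_def, hfi]
            rw [hz]
            split_ifs at ihn ⊢ <;> omega
          · rcases eq_or_ne (⟨n, hn⟩ : Fin k) j with hfj | hfj
            · have hjv : j.val = n := by rw [← hfj]
              have hz : z'' ⟨n, hn⟩ = z' ⟨n, hn⟩ - 1 := by rw [hfj]; exact hz''j
              have h1 : 1 ≤ z' ⟨n, hn⟩ := by rw [hfj]; exact h1j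
              rw [hz]
              split_ifs at ihn ⊢ <;> omega
            · have hiv : i.val ≠ n := by
                intro h; exact hfi (Fin.ext (by simpa using h.symm))
              have hjv : j.val ≠ n := by
                intro h; exact hfj (Fin.ext (by simpa using h.symm))
              have hz : z'' ⟨n, hn⟩ = z' ⟨n, hn⟩ := hz''o _ hfi hfj
              rw [hz]
              split_ifs at ihn ⊢ <;> omega
        · have e1 : Pre z'' (n + 1) = Pre z'' n := by
            rw [Pre_ge z'' (by omega), Pre_ge z'' (by omega)]
          have e2 : Pre z' (n + 1) = Pre z' n := by
            rw [Pre_ge z' (by omega), Pre_ge z' (by omega)]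
          have hik := i.isLt
          have hjk := j.isLt
          rw [e1, e2]
          split_ifs at ihn ⊢ <;> omega
    -- strict prefix gap on (i, j]
    have hstrict : ∀ n, i.val + 1 ≤ n → n ≤ j.val → Pre z' n < Pre z n := by
      intro n hn
      induction n, hn using Nat.le_induction with
      | base =>
        intro _
        have e1 := Pre_succ z i.isLt
        have e2 := Pre_succ z' i.isLt
        have hl : (⟨i.val, i.isLt⟩ : Fin k) = i := rfl
        rw [hl] at e1 e2
        have h2 := hpre_i i.val le_rfl
        omega
      | succ n hn ihn =>
        intro hnj
        have hnk : n < k := by have := j.isLt; omega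
        rw [Pre_succ z hnk, Pre_succ z' hnk]
        have hm : z' ⟨n, hnk⟩ ≤ z ⟨n, hnk⟩ := by
          apply hmid ⟨n, hnk⟩
          · exact hn
          · exact hnj
        have := ihn (by omega)
        omega
    have hle'' : ∀ n, Pre z'' n ≤ Pre z n := by
      intro n
      have hk1 := key n
      by_cases h1 : i.val < n
      · by_cases h2 : j.val < n
        · rw [if_pos h1, if_pos h2] at hk1
          have := hle n
          omega
        · rw [if_pos h1, if_neg h2] at hk1
          have := hstrict n (by omega) (by omega)
          omega
      · have h2 : ¬ j.val < n := by omega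
        rw [if_neg h1, if_neg h2] at hk1
        have := hle n
        omega
    have hge'' : ∀ n, Pre z' n ≤ Pre z'' n := by
      intro n
      have hk1 := key n
      split_ifs at hk1 <;> omega
    have htot'' : (∑ l, z l) = ∑ l, z'' l := by
      have hk1 := key (k + 1)
      rw [if_pos (by have := i.isLt; omega), if_pos (by have := j.isLt; omega)] at hk1
      rw [Pre_ge z'' (by omega), Pre_ge z' (by omega)] at hk1
      omega
    have hmeas'' : (∑ n ∈ Finset.range (k + 1), (Pre z n - Pre z'' n)) ≤ N := by
      have hlt : (∑ n ∈ Finset.range (k + 1), (Pre z n - Pre z'' n))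
          < ∑ n ∈ Finset.range (k + 1), (Pre z n - Pre z' n) := by
        apply Finset.sum_lt_sum
        · intro n _
          have := hge'' n
          omega
        · refine ⟨i.val + 1, Finset.mem_range.mpr (by have := i.isLt; omega), ?_⟩
          have hk1 := key (i.val + 1)
          rw [if_neg (by omega), if_pos (by omega)] at hk1
          have h3 := hstrict (i.val + 1) le_rfl (by omega)
          omega
      omega
    calc F z' ≤ F z'' := by
          apply hF z'' z' i j hij hz''i (by omega) hz''o
      _ ≤ F z := ih z z'' hle'' htot'' hmeas''

lemma Pre_sub (y w : Fin k → ℕ) (h : ∀ l, w l ≤ y l) (n : ℕ) :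
    Pre (fun l => y l - w l) n + Pre w n = Pre y n := by
  rw [Pre, Pre, Pre, ← Finset.sum_add_distrib]
  exact Finset.sum_congr rfl (fun l _ => by have := h l; omega)

end Stmt5Aux

open Stmt5Aux in
/-- If `F` on residual supply profiles is monotone with respect to shifting one
unit of supply from a higher-indexed variety `j` to a lower-indexed variety `i < j`, then the
top-down recursive solution `v*` maximizes `v ↦ F (y − v)` over the feasibility set `V(u,y)`. -/
theorem stmt5 (k : ℕ) (hk : 1 ≤ k) (F : (Fin k → ℕ) → ℝ)
    (hF : ∀ z z' : Fin k → ℕ, ∀ i j : Fin k, i < j →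
      z i = z' i + 1 → z' j = z j + 1 → (∀ l : Fin k, l ≠ i → l ≠ j → z l = z' l) →
      F z' ≤ F z)
    (u y vstar : Fin k → ℕ)
    (hu : ∀ j : Fin k, (∑ l ∈ Finset.Iic j, u l) ≤ (∑ l ∈ Finset.Iic j, y l))
    (hvstar : ∀ j : Fin k,
      vstar j = min (y j)
        (u j + ((∑ l ∈ Finset.Ioi j, u l) - (∑ l ∈ Finset.Ioi j, vstar l)))) :
    ∀ v : Fin k → ℕ,
      (∀ m : Fin k, v m ≤ y m) →
      (∀ m : Fin k, (∑ l ∈ Finset.Iic m, u l) ≤ (∑ l ∈ Finset.Iic m, v l)) →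
      ((∑ l : Fin k, v l) = (∑ l : Fin k, u l)) →
      F (fun l => y l - v l) ≤ F (fun l => y l - vstar l) := by
  intro v hvy hvfeas hvtot
  -- convert hypotheses to Pre/Suf form
  have hvstar' : ∀ j : Fin k,
      vstar j = min (y j) (u j + (Suf u (j.val + 1) - Suf vstar (j.val + 1))) := by
    intro j
    rw [← sum_Ioi u j, ← sum_Ioi vstar j]
    exact hvstar j
  have hu' : ∀ n, Pre u n ≤ Pre y n := by
    apply pre_all hk
    intro j
    rw [← sum_Iic u j, ← sum_Iic y j]
    exact hu j
  have hvfeas' : ∀ n, Pre u n ≤ Pre v n := by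
    apply pre_all hk
    intro j
    rw [← sum_Iic u j, ← sum_Iic v j]
    exact hvfeas j
  have hA := claimA u y vstar hvstar'
  have hB := claimB u y vstar hvstar' hu'
  have hC := claimC u y vstar hvstar' v hvy hvfeas' hvtot
  -- pointwise vstar ≤ y
  have hvsy : ∀ l, vstar l ≤ y l := by
    intro l
    rw [hvstar' l]
    exact min_le_left _ _
  -- total of vstar equals total of u
  have htot_vstar : (∑ l, vstar l) = ∑ l, u l := by
    have h1 := hA 0
    have h2 := hB 0
    rw [Suf_zero, Suf_zero] at h1
    rw [Suf_zero, Pre_zero] at h2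
    omega
  -- prefix comparison: Pre vstar n ≤ Pre v n
  have hprev : ∀ n, Pre vstar n ≤ Pre v n := by
    intro n
    have h1 := Pre_add_Suf vstar n
    have h2 := Pre_add_Suf v n
    have h3 := hC n
    omega
  -- apply exchange lemma
  apply exchange F hF (∑ n ∈ Finset.range (k + 1),
    (Pre (fun l => y l - vstar l) n - Pre (fun l => y l - v l) n))
  · intro n
    have h1 := Pre_sub y v hvy n
    have h2 := Pre_sub y vstar hvsy n
    have h3 := hprev n
    omega
  · have h1 := Pre_sub y v hvy k
    have h2 := Pre_sub y vstar hvsy k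
    rw [Pre_ge _ le_rfl, Pre_ge _ le_rfl] at h1 h2
    have h3 := Pre_ge v (le_refl k)
    omega
  · exact le_rfl
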